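/- Given $\varepsilon>0$ and integers $d>q\geq 1$, there exists $\iota_0\in(0,1)$ such that for all $\iota\in(\iota_0,1)$, the number $\#I(\iota,n)$ of words $w\in\{1,\dots,d\}^n$ having at least $\iota n$ letters in $\{1,\dots,q\}$ satisfies $\limsup_{n\to\infty}\frac{1}{n}\log \#I(\iota,n) < \log q + \varepsilon$; consequently there exists $C>0$ with $\#I(\iota,n)\leq C q^n e^{\varepsilon n}$ for all $n$. -/

import Mathlib

open Finset Filter

lemma count_key (d q n : ℕ) (hqd : q < d) (ι t : ℝ) (ht : 1 ≤ t) :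
    ((univ.filter (fun w : Fin n → Fin d =>
        ι * n ≤ ((univ.filter (fun k : Fin n => (w k : ℕ) < q)).card : ℝ))).card : ℝ) * t ^ (ι * n)
      ≤ ((q : ℝ) * t + ((d : ℝ) - q)) ^ n := by
  have htpos : (0:ℝ) < t := lt_of_lt_of_le one_pos ht
  set G : (Fin n → Fin d) → ℕ := fun w => (univ.filter fun k => (w k : ℕ) < q).card with hG
  set S := univ.filter (fun w : Fin n → Fin d => ι * n ≤ (G w : ℝ)) with hS
  calc ((S.card : ℝ)) * t ^ (ι * n) = ∑ _w ∈ S, t ^ (ι * n) := by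
        rw [sum_const, nsmul_eq_mul]
    _ ≤ ∑ w ∈ S, t ^ ((G w : ℕ) : ℝ) := by
        refine sum_le_sum fun w hw => ?_
        exact Real.rpow_le_rpow_of_exponent_le ht (mem_filter.mp hw).2
    _ ≤ ∑ w : Fin n → Fin d, t ^ ((G w : ℕ) : ℝ) := by
        refine sum_le_sum_of_subset_of_nonneg (filter_subset _ _) fun w _ _ => ?_
        exact (Real.rpow_pos_of_pos htpos _).le
    _ = ∑ w : Fin n → Fin d, ∏ k, (if (w k : ℕ) < q then t else 1) := by
        refine Finset.sum_congr rfl fun w _ => ?_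
        rw [Real.rpow_natCast, Finset.prod_ite, prod_const, prod_const, one_pow, mul_one]
    _ = ∏ k : Fin n, ∑ a : Fin d, (if (a : ℕ) < q then t else 1) := by
        rw [Finset.prod_univ_sum]; simp [Fintype.piFinset_univ]
    _ = ((q : ℝ) * t + ((d : ℝ) - q)) ^ n := by
        have hcard : (univ.filter (fun a : Fin d => (a:ℕ) < q)).card = q := by
          have : (univ.filter (fun a : Fin d => (a:ℕ) < q)) = Finset.Iio (⟨q, hqd⟩ : Fin d) := by
            ext a; simp [Fin.lt_def]
          rw [this, Fin.card_Iio]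
        have hsum : ∑ a : Fin d, (if (a : ℕ) < q then t else 1) = (q : ℝ) * t + ((d : ℝ) - q) := by
          rw [Finset.sum_ite, sum_const, sum_const, nsmul_eq_mul, nsmul_eq_mul, hcard]
          have h2 : (univ.filter (fun a : Fin d => ¬ (a:ℕ) < q)).card = d - q := by
            have := Finset.card_filter_add_card_filter_not
              (s := (univ : Finset (Fin d))) (p := fun a : Fin d => (a:ℕ) < q)
            simp only [hcard, Finset.card_univ, Fintype.card_fin] at this
            omega
          rw [h2]
          have h3 : ((d - q : ℕ) : ℝ) = (d : ℝ) - q := by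
            push_cast [Nat.cast_sub hqd.le]; ring
          rw [h3]; ring
        rw [hsum, prod_const, card_univ, Fintype.card_fin]

/-- Counting lemma of Varandas–Viana: for `ι` close enough to 1, the number of
words of length `n` over an alphabet of size `d` having at least `ι n` letters
among the first `q` letters has exponential growth rate below `log q + ε`, and
consequently is bounded by `C q^n e^{ε n}`. -/
theorem count_bad_words (ε : ℝ) (hε : 0 < ε) (d q : ℕ) (hq : 1 ≤ q) (hqd : q < d) :
    ∃ ι₀ : ℝ, ι₀ ∈ Set.Ioo (0 : ℝ) 1 ∧ ∀ ι : ℝ, ι ∈ Set.Ioo ι₀ 1 →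
      (Filter.limsup (fun n : ℕ =>
          (1 / (n : ℝ)) * Real.log
            ((Finset.univ.filter (fun w : Fin n → Fin d =>
              ι * n ≤ ((Finset.univ.filter (fun k : Fin n => (w k : ℕ) < q)).card : ℝ))).card))
        atTop < Real.log q + ε) ∧
      ∃ C : ℝ, 0 < C ∧ ∀ n : ℕ,
        (((Finset.univ.filter (fun w : Fin n → Fin d =>
            ι * n ≤ ((Finset.univ.filter (fun k : Fin n => (w k : ℕ) < q)).card : ℝ))).card : ℝ))
          ≤ C * (q : ℝ) ^ n * Real.exp (ε * n) := by
  have hexp : (1:ℝ) < Real.exp (ε/4) := by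
    rw [← Real.exp_zero]; exact Real.exp_lt_exp.mpr (by linarith)
  set E : ℝ := Real.exp (ε/4) - 1 with hE
  have hE0 : 0 < E := by simp [hE]; linarith
  set t : ℝ := max 1 (((d : ℝ) - q)/E) with htdef
  have ht : 1 ≤ t := le_max_left _ _
  have htE : ((d : ℝ) - q)/E ≤ t := le_max_right _ _
  clear_value t
  clear_value E
  have htpos : (0:ℝ) < t := lt_of_lt_of_le one_pos ht
  have hq1 : (1:ℝ) ≤ (q:ℝ) := by exact_mod_cast hq
  have hbound : (q:ℝ) * t + ((d:ℝ) - q) ≤ (q:ℝ) * t * Real.exp (ε/4) := by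
    have h1 := htE
    have h2 : (d:ℝ) - q ≤ t * E := by
      rw [div_le_iff₀ hE0] at h1; linarith
    have h3 : t*E ≤ (q:ℝ)*(t*E) := le_mul_of_one_le_left (by positivity) hq1
    have hE' : Real.exp (ε/4) = E + 1 := by simp [hE]
    have h4 : (q:ℝ) * t * Real.exp (ε/4) = (q:ℝ)*(t*E) + (q:ℝ)*t := by rw [hE']; ring
    linarith
  set L : ℝ := Real.log t with hLdef
  have hL : 0 ≤ L := Real.log_nonneg ht
  have hL1 : (0:ℝ) < L + 1 := by linarith
  refine ⟨max (1/2) (1 - ε/(4*(L+1))), ⟨lt_of_lt_of_le (by norm_num) (le_max_left _ _),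
    max_lt (by norm_num) (by nlinarith [div_pos hε (by linarith : (0:ℝ) < 4*(L+1))])⟩, ?_⟩
  intro ι hι
  obtain ⟨hιl, hι1⟩ := hι
  have hι0 : (0:ℝ) < ι := lt_of_lt_of_le (by norm_num) ((le_max_left _ _).trans hιl.le)
  have hιL : (1 - ι) * L ≤ ε/4 := by
    have h1 : 1 - ε/(4*(L+1)) < ι := lt_of_le_of_lt (le_max_right _ _) hιl
    have h2 : 1 - ι < ε/(4*(L+1)) := by linarith
    have h3 : (1 - ι) * (L + 1) ≤ ε/(4*(L+1)) * (L + 1) :=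
      mul_le_mul_of_nonneg_right h2.le hL1.le
    have h4 : ε/(4*(L+1)) * (L + 1) = ε/4 := by field_simp
    nlinarith
  -- main bound
  have hmain : ∀ n : ℕ,
      (((univ.filter (fun w : Fin n → Fin d =>
          ι * n ≤ ((univ.filter (fun k : Fin n => (w k : ℕ) < q)).card : ℝ))).card : ℝ))
        ≤ (q : ℝ) ^ n * Real.exp (ε/2 * n) := by
    intro n
    have h1 := count_key d q n hqd ι t ht
    have h2 : ((q:ℝ) * t + ((d:ℝ) - q)) ^ n ≤ ((q:ℝ) * t * Real.exp (ε/4)) ^ n := by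
      refine pow_le_pow_left₀ ?_ hbound n
      have : (q:ℝ) ≤ (d:ℝ) := by exact_mod_cast hqd.le
      nlinarith
    have hr : (0:ℝ) < t ^ (ι * n) := Real.rpow_pos_of_pos htpos _
    rw [← mul_le_mul_iff_of_pos_right hr]
    refine h1.trans (h2.trans ?_)
    have ht1 : t^n * (Real.exp (ε/4))^n ≤ Real.exp (ε/2 * n) * t ^ (ι*n) := by
      have e1 : (t:ℝ)^n = t ^ (ι * n) * t ^ ((1-ι) * n) := by
        rw [← Real.rpow_natCast t n, ← Real.rpow_add htpos]; ring_nf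
      have e2 : t ^ ((1-ι) * n) = Real.exp (L * ((1-ι) * n)) := by
        rw [Real.rpow_def_of_pos htpos]
      have e3 : (Real.exp (ε/4))^n = Real.exp ((n:ℝ) * (ε/4)) := by
        rw [Real.exp_nat_mul]
      rw [e1, e2, e3]
      have e4 : Real.exp (L * ((1-ι) * n)) * Real.exp ((n:ℝ) * (ε/4))
          ≤ Real.exp (ε/2 * n) := by
        rw [← Real.exp_add, Real.exp_le_exp]
        have hn : (0:ℝ) ≤ (n:ℝ) := Nat.cast_nonneg n
        nlinarith [mul_le_mul_of_nonneg_right hιL hn]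
      calc t ^ (ι*n) * Real.exp (L * ((1-ι) * n)) * Real.exp ((n:ℝ) * (ε/4))
          = (Real.exp (L * ((1-ι) * n)) * Real.exp ((n:ℝ) * (ε/4))) * t ^ (ι*n) := by ring
        _ ≤ Real.exp (ε/2 * n) * t ^ (ι*n) :=
            mul_le_mul_of_nonneg_right e4 hr.le
    calc ((q:ℝ) * t * Real.exp (ε/4)) ^ n = (q:ℝ)^n * (t^n * (Real.exp (ε/4))^n) := by
          rw [mul_pow, mul_pow]; ring
      _ ≤ (q:ℝ)^n * (Real.exp (ε/2 * n) * t ^ (ι*n)) := by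
          refine mul_le_mul_of_nonneg_left ht1 (by positivity)
      _ = (q:ℝ)^n * Real.exp (ε/2 * n) * t ^ (ι*n) := by ring
  -- cardinality is at least 1
  have hone : ∀ n : ℕ, 1 ≤ ((univ.filter (fun w : Fin n → Fin d =>
      ι * n ≤ ((univ.filter (fun k : Fin n => (w k : ℕ) < q)).card : ℝ))).card) := by
    intro n
    refine Finset.card_pos.mpr ⟨fun _ => (⟨0, by omega⟩ : Fin d), ?_⟩
    rw [mem_filter]
    refine ⟨mem_univ _, ?_⟩
    have : (univ.filter (fun k : Fin n => ((0:ℕ)) < q)) = univ := by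
      simp [Nat.lt_of_lt_of_le Nat.zero_lt_one hq]
    simp only [this, card_univ, Fintype.card_fin]
    calc ι * n ≤ 1 * n := mul_le_mul_of_nonneg_right hι1.le (Nat.cast_nonneg n)
      _ = n := one_mul _
  have hlogq : 0 ≤ Real.log q := Real.log_nonneg hq1
  constructor
  · -- limsup
    have hub : ∀ n : ℕ, 1 ≤ n → (1 / (n : ℝ)) * Real.log
        ((univ.filter (fun w : Fin n → Fin d =>
          ι * n ≤ ((univ.filter (fun k : Fin n => (w k : ℕ) < q)).card : ℝ))).card)
        ≤ Real.log q + ε/2 := by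
      intro n hn
      have hnpos : (0:ℝ) < n := by exact_mod_cast hn
      have hcpos : (0:ℝ) < ((univ.filter (fun w : Fin n → Fin d =>
          ι * n ≤ ((univ.filter (fun k : Fin n => (w k : ℕ) < q)).card : ℝ))).card : ℝ) := by
        exact_mod_cast hone n
      have hlog := Real.log_le_log hcpos (hmain n)
      rw [Real.log_mul (by positivity) (Real.exp_ne_zero _), Real.log_pow, Real.log_exp] at hlog
      rw [one_div, inv_mul_le_iff₀ hnpos]
      calc Real.log _ ≤ (n:ℝ) * Real.log q + ε/2 * n := hlog
        _ = (n:ℝ) * (Real.log q + ε/2) := by ring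
  -- nonneg
    have hnn : ∀ n : ℕ, 0 ≤ (1 / (n : ℝ)) * Real.log
        ((univ.filter (fun w : Fin n → Fin d =>
          ι * n ≤ ((univ.filter (fun k : Fin n => (w k : ℕ) < q)).card : ℝ))).card) := by
      intro n
      have : (1:ℝ) ≤ ((univ.filter (fun w : Fin n → Fin d =>
          ι * n ≤ ((univ.filter (fun k : Fin n => (w k : ℕ) < q)).card : ℝ))).card : ℝ) := by
        exact_mod_cast hone n
      have := Real.log_nonneg this
      positivity
    have hcb : IsCoboundedUnder (· ≤ ·) atTop (fun n : ℕ => (1 / (n : ℝ)) * Real.log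
        ((univ.filter (fun w : Fin n → Fin d =>
          ι * n ≤ ((univ.filter (fun k : Fin n => (w k : ℕ) < q)).card : ℝ))).card)) := by
      refine Filter.IsBoundedUnder.isCoboundedUnder_le ⟨0, ?_⟩
      exact Filter.eventually_map.mpr (Filter.Eventually.of_forall fun n => hnn n)
    have hle := Filter.limsup_le_of_le hcb
      (Filter.eventually_atTop.mpr ⟨1, fun n hn => hub n hn⟩)
    linarith
  · refine ⟨1, one_pos, fun n => ?_⟩
    rw [one_mul]
    refine (hmain n).trans ?_
    refine mul_le_mul_of_nonneg_left (Real.exp_le_exp.mpr ?_) (by positivity)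
    nlinarith [Nat.cast_nonneg (α := ℝ) n]
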